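/- For all real numbers p > 2, s ∈ (0,1), and positive reals a, b, x, y, the inequality (s·a^p/x^p + (1−s)·b^p/y^p)·(s·x² + (1−s)·y²)·(s·x + (1−s)·y)^{p−2} ≥ (s·a + (1−s)·b)^p holds. -/

import Mathlib

open Real

theorem holder_convexity_ineq (p s a b x y : ℝ) (hp : 2 < p) (hs0 : 0 < s) (hs1 : s < 1)
    (ha : 0 < a) (hb : 0 < b) (hx : 0 < x) (hy : 0 < y) :
    (s * a ^ p / x ^ p + (1 - s) * b ^ p / y ^ p) * (s * x ^ 2 + (1 - s) * y ^ 2)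
      * (s * x + (1 - s) * y) ^ (p - 2) ≥ (s * a + (1 - s) * b) ^ p := by
  have hp0 : (0:ℝ) < p := by linarith
  have hs1' : (0:ℝ) < 1 - s := by linarith
  set A := s * a ^ p / x ^ p + (1 - s) * b ^ p / y ^ p with hA
  set B := s * x ^ 2 + (1 - s) * y ^ 2 with hB
  set C := s * x + (1 - s) * y with hC
  have hxp : (0:ℝ) < x ^ p := rpow_pos_of_pos hx p
  have hyp : (0:ℝ) < y ^ p := rpow_pos_of_pos hy p
  have hA0 : 0 < A := by positivity
  have hB0 : 0 < B := by positivity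
  have hC0 : 0 < C := by positivity
  set D := A ^ (1/p) * B ^ (1/p) * C ^ ((p-2)/p) with hD
  have hD0 : 0 < D := by positivity
  have hwsum : 1/p + 1/p + (p-2)/p = 1 := by field_simp; ring
  have key : ∀ t u : ℝ, 0 < t → 0 < u →
      t / D ≤ 1/p * (t^p/u^p / A) + 1/p * ((u^2:ℝ) / B) + (p-2)/p * (u / C) := by
    intro t u ht hu
    have hup : (0:ℝ) < u ^ p := rpow_pos_of_pos hu p
    have h := Real.geom_mean_le_arith_mean3_weighted
      (w₁ := 1/p) (w₂ := 1/p) (w₃ := (p-2)/p)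
      (p₁ := t^p/u^p / A) (p₂ := (u^2:ℝ) / B) (p₃ := u / C)
      (by positivity) (by positivity) (div_nonneg (by linarith) hp0.le)
      (by positivity) (by positivity) (by positivity) hwsum
    have e1 : (t^p/u^p / A) ^ (1/p) = (t/u) / A ^ (1/p) := by
      rw [← Real.div_rpow ht.le hu.le, Real.div_rpow (by positivity) hA0.le,
        ← Real.rpow_mul (by positivity : (0:ℝ) ≤ t/u), mul_one_div_cancel hp0.ne',
        Real.rpow_one]
    have e2 : ((u^2:ℝ) / B) ^ (1/p) = u ^ (2/p) / B ^ (1/p) := by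
      rw [Real.div_rpow (by positivity) hB0.le, ← Real.rpow_natCast u 2,
        ← Real.rpow_mul hu.le]
      norm_num [div_eq_mul_inv]
    have e3 : (u / C) ^ ((p-2)/p) = u ^ ((p-2)/p) / C ^ ((p-2)/p) :=
      Real.div_rpow hu.le hC0.le _
    have hu2 : u ^ (2/p) * u ^ ((p-2)/p) = u := by
      rw [← Real.rpow_add hu]
      have : 2/p + (p-2)/p = 1 := by field_simp; ring
      rw [this, Real.rpow_one]
    have elhs : (t^p/u^p / A) ^ (1/p) * ((u^2:ℝ) / B) ^ (1/p) * (u / C) ^ ((p-2)/p)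
        = t / D := by
      rw [e1, e2, e3, hD]
      have : t/u / A^(1/p) * (u^(2/p) / B^(1/p)) * (u^((p-2)/p) / C^((p-2)/p))
          = t/u * (u^(2/p) * u^((p-2)/p)) / (A^(1/p) * B^(1/p) * C^((p-2)/p)) := by
        ring
      rw [this, hu2, div_mul_cancel₀ t hu.ne']
    rw [elhs] at h
    exact h
  have k1 := key a x ha hx
  have k2 := key b y hb hy
  have hsum := add_le_add (mul_le_mul_of_nonneg_left k1 hs0.le)
    (mul_le_mul_of_nonneg_left k2 hs1'.le)
  have hL : s * (a / D) + (1-s) * (b / D) = (s * a + (1-s) * b) / D := by ring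
  have hR : s * (1/p * (a^p/x^p / A) + 1/p * ((x^2:ℝ) / B) + (p-2)/p * (x / C))
      + (1-s) * (1/p * (b^p/y^p / A) + 1/p * ((y^2:ℝ) / B) + (p-2)/p * (y / C))
      = 1/p * (A/A) + 1/p * (B/B) + (p-2)/p * (C/C) := by
    rw [hA, hB, hC]; ring
  rw [hL, hR, div_self hA0.ne', div_self hB0.ne', div_self hC0.ne'] at hsum
  have hab : s * a + (1-s) * b ≤ D := by
    have h1 : (s * a + (1-s) * b) / D ≤ 1 := by linarith [hwsum]
    exact (div_le_one hD0).mp h1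
  have hfin : (s * a + (1-s) * b) ^ p ≤ D ^ p :=
    Real.rpow_le_rpow (by positivity) hab hp0.le
  have hDp : D ^ p = A * B * C ^ (p-2) := by
    rw [hD, Real.mul_rpow (by positivity) (by positivity),
      Real.mul_rpow (by positivity) (by positivity),
      ← Real.rpow_mul hA0.le, ← Real.rpow_mul hB0.le, ← Real.rpow_mul hC0.le,
      one_div_mul_cancel hp0.ne', Real.rpow_one, Real.rpow_one,
      div_mul_cancel₀ _ hp0.ne']
  rw [hDp] at hfin
  exact hfin
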